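/- For every a ∈ ℚ_q, if a_i ∈ 𝔽_q denotes the reduction mod p of Ψ_q(p^{−i} a) ∈ ℤ_q, then a = Σ_{i ≫ −∞} [a_i] p^i, where [·] denotes the Teichmüller lift 𝔽_q → ℤ_q; i.e., the a_i are the Witt/Teichmüller digits of a. -/

import Mathlib

open PowerSeries

/-- `Ψ ∈ T + T²ℤ[[T]]` satisfies `∑_{j≥0} p^{-j} Ψ(p^j T)^{q^j} = T` (coefficientwise). -/
def IsPsi (p q : ℕ) (Ψ : PowerSeries ℤ) : Prop :=
  PowerSeries.constantCoeff Ψ = 0 ∧ PowerSeries.coeff 1 Ψ = 1 ∧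
  ∀ n : ℕ,
    (∑ j ∈ Finset.range (n + 1),
      ((p : ℚ) ^ j)⁻¹ *
        PowerSeries.coeff n
          ((PowerSeries.rescale ((p : ℚ) ^ j) (Ψ.map (Int.castRingHom ℚ))) ^ (q ^ j)))
      = PowerSeries.coeff n (PowerSeries.X : PowerSeries ℚ)

/-- Evaluation of the entire function defined by an integral power series at a point of a
complete nonarchimedean field. -/
noncomputable def psiEval (Ψ : PowerSeries ℤ) {K : Type} [NormedField K] (x : K) : K :=
  ∑' i : ℕ, ((PowerSeries.coeff i Ψ : ℤ) : K) * x ^ i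


open Finset

open Filter

variable {p q : ℕ} {Ψ : PowerSeries ℤ}

lemma coeff_pow_zero (h0 : constantCoeff Ψ = 0) :
    ∀ m n : ℕ, n < m → coeff n (Ψ ^ m) = 0 := by
  intro m
  induction m with
  | zero => intro n hn; exact absurd hn (Nat.not_lt_zero n)
  | succ m ih =>
    intro n hn
    rw [pow_succ, coeff_mul]
    refine Finset.sum_eq_zero fun ab hab => ?_
    rw [Finset.HasAntidiagonal.mem_antidiagonal] at hab
    rcases lt_or_ge ab.1 m with h | h
    · rw [ih ab.1 h, zero_mul]
    · have h2 : ab.2 = 0 := by omega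
      rw [h2, coeff_zero_eq_constantCoeff, h0, mul_zero]

lemma coeff_pow_dvd (h0 : constantCoeff Ψ = 0) {k D : ℕ}
    (hd : ∀ n : ℕ, (p : ℤ) ^ (k * (n - 1)) ∣ (p : ℤ) ^ D * coeff n Ψ) :
    ∀ m n : ℕ, (p : ℤ) ^ (k * (n - m)) ∣ (p : ℤ) ^ (D * m) * coeff n (Ψ ^ m) := by
  intro m
  induction m with
  | zero =>
    intro n
    rcases Nat.eq_zero_or_pos n with rfl | hn
    · simp
    · rw [pow_zero Ψ, PowerSeries.coeff_one, if_neg (by omega)]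
      simp
  | succ m ih =>
    intro n
    rw [pow_succ, coeff_mul, Finset.mul_sum]
    refine Finset.dvd_sum fun ab hab => ?_
    rw [Finset.HasAntidiagonal.mem_antidiagonal] at hab
    have key : (p : ℤ) ^ (D * (m + 1)) * (coeff ab.1 (Ψ ^ m) * coeff ab.2 Ψ)
        = ((p : ℤ) ^ (D * m) * coeff ab.1 (Ψ ^ m)) * ((p : ℤ) ^ D * coeff ab.2 Ψ) := by
      rw [Nat.mul_succ, pow_add]; ring
    rw [key]
    have hle : n - (m + 1) ≤ (ab.1 - m) + (ab.2 - 1) := by omega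
    calc (p : ℤ) ^ (k * (n - (m + 1)))
        ∣ (p : ℤ) ^ (k * (ab.1 - m)) * (p : ℤ) ^ (k * (ab.2 - 1)) := by
          rw [← pow_add]
          refine pow_dvd_pow _ ?_
          rw [← Nat.mul_add]
          exact Nat.mul_le_mul_left k hle
      _ ∣ _ := mul_dvd_mul (ih ab.1) (hd ab.2)

lemma key_id (hp : 1 < p) (hΨ : IsPsi p q Ψ) :
    ∀ n : ℕ, 1 ≤ n →
      (∑ j ∈ range (n + 1), (p : ℤ) ^ (j * (n - 1)) * coeff n (Ψ ^ (q ^ j)))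
        = if n = 1 then 1 else 0 := by
  intro n hn
  obtain ⟨n', rfl⟩ : ∃ n', n = n' + 1 := ⟨n - 1, by omega⟩
  have h := hΨ.2.2 (n' + 1)
  have hp0 : (p : ℚ) ≠ 0 := by positivity
  have hterm : ∀ j : ℕ,
      ((p : ℚ) ^ j)⁻¹ *
        coeff (n' + 1) ((rescale ((p : ℚ) ^ j) (Ψ.map (Int.castRingHom ℚ))) ^ (q ^ j))
      = (((p : ℤ) ^ (j * n') * coeff (n' + 1) (Ψ ^ (q ^ j)) : ℤ) : ℚ) := by
    intro j
    rw [← map_pow (rescale ((p : ℚ) ^ j)), coeff_rescale,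
      ← map_pow (PowerSeries.map (Int.castRingHom ℚ)) Ψ (q ^ j), PowerSeries.coeff_map, eq_intCast]
    push_cast
    have hh : (((p : ℚ) ^ j) ^ (n' + 1)) = (p : ℚ) ^ j * (p : ℚ) ^ (j * n') := by
      rw [← pow_mul, ← pow_add]; ring_nf
    rw [hh]
    field_simp
  rw [Finset.sum_congr rfl (fun j _ => hterm j), PowerSeries.coeff_X] at h
  have h4 : ((∑ j ∈ range (n' + 1 + 1), (p : ℤ) ^ (j * n') * coeff (n' + 1) (Ψ ^ q ^ j) : ℤ) : ℚ)
      = (((if n' + 1 = 1 then 1 else 0 : ℤ)) : ℚ) := by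
    push_cast at h ⊢
    rw [h]
  have h5 := Int.cast_injective (α := ℚ) h4
  simpa only [Nat.add_sub_cancel] using h5

lemma coeff_rec (hp : 1 < p) (hΨ : IsPsi p q Ψ) {n : ℕ} (hn : 2 ≤ n) :
    coeff n Ψ
      = -∑ j ∈ range n, (p : ℤ) ^ ((j + 1) * (n - 1)) * coeff n (Ψ ^ (q ^ (j + 1))) := by
  have h := key_id hp hΨ n (by omega)
  rw [Finset.sum_range_succ', if_neg (by omega : n ≠ 1)] at h
  simp only [pow_zero, pow_one, zero_mul] at h
  linarith [h]

lemma arith1 {q k D J n : ℕ} (hq : 2 ≤ q) (hJ : 1 ≤ J) (hqJ : q ^ J ≤ n) :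
    (k + 1) * (n - 1) + D * q ^ J
      ≤ (k + D) * q ^ (k + D + 1) + J * (n - 1) + k * (n - q ^ J) := by
  have h2j : J < 2 ^ J := Nat.lt_two_pow_self (n := J)
  have hq2j : 2 ^ J ≤ q ^ J := Nat.pow_le_pow_left hq J
  have ht2 : (2 : ℕ) ≤ q ^ J := by
    calc (2 : ℕ) = 2 ^ 1 := by norm_num
      _ ≤ 2 ^ J := Nat.pow_le_pow_right (by norm_num) hJ
      _ ≤ q ^ J := hq2j
  rcases le_or_gt J (k + D + 1) with hc | hc
  · have h1 : q ^ J ≤ q ^ (k + D + 1) := Nat.pow_le_pow_right (by omega) hc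
    obtain ⟨r, hr⟩ : ∃ r, q ^ J = r + 1 := ⟨q ^ J - 1, by omega⟩
    obtain ⟨s, hs⟩ : ∃ s, n = (r + 1) + s := ⟨n - (r + 1), by omega⟩
    rw [hr] at h1 ⊢
    rw [hs]
    have em : (r + 1) + s - 1 = r + s := by omega
    have es : (r + 1) + s - (r + 1) = s := by omega
    rw [em, es]
    have hA : (k + D) * (r + 1) ≤ (k + D) * q ^ (k + D + 1) :=
      Nat.mul_le_mul_left _ h1
    have hB : (r + s) ≤ J * (r + s) := Nat.le_mul_of_pos_left _ (by omega)
    nlinarith [hA, hB]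
  · obtain ⟨u, rfl⟩ : ∃ u, J = u + 1 := ⟨J - 1, by omega⟩
    obtain ⟨r, hr⟩ : ∃ r, q ^ (u + 1) = r + 1 := ⟨q ^ (u + 1) - 1, by omega⟩
    obtain ⟨s, hs⟩ : ∃ s, n = (r + 1) + s := ⟨n - (r + 1), by omega⟩
    rw [hr] at hq2j ⊢
    rw [hs]
    have em : (r + 1) + s - 1 = r + s := by omega
    have es : (r + 1) + s - (r + 1) = s := by omega
    rw [em, es]
    have hur : u + 1 ≤ r := by omega
    have hkd : k + D + 2 ≤ u + 1 := by omega
    have hbig : (k + D + 1) * r ≤ u * (r + s) := Nat.mul_le_mul (by omega) (by omega)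
    have h7 : (k + D) * (r + 1) ≤ (k + D + 1) * r := by nlinarith [show k + D ≤ r by omega]
    nlinarith [hbig, h7, Nat.zero_le ((k + D) * q ^ (k + D + 1)), Nat.zero_le (k * s)]

lemma val_bound (hp : 1 < p) (hq2 : 2 ≤ q) (hΨ : IsPsi p q Ψ) :
    ∀ k : ℕ, ∃ D : ℕ, ∀ n : ℕ, (p : ℤ) ^ (k * (n - 1)) ∣ (p : ℤ) ^ D * coeff n Ψ := by
  intro k
  induction k with
  | zero => exact ⟨0, fun n => by simp⟩
  | succ k ih =>
    obtain ⟨D, hD⟩ := ih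
    refine ⟨(k + D) * q ^ (k + D + 1), fun n => ?_⟩
    rcases lt_or_ge n 2 with hn | hn
    · have h01 : n - 1 = 0 := by omega
      rw [h01, Nat.mul_zero, pow_zero]
      exact one_dvd _
    · rw [coeff_rec hp hΨ hn, mul_neg, dvd_neg, Finset.mul_sum]
      refine Finset.dvd_sum fun j hj => ?_
      set J := j + 1 with hJdef
      rcases lt_or_ge n (q ^ J) with hnq | hnq
      · rw [coeff_pow_zero hΨ.1 _ _ hnq]
        simp
      · have h1 := coeff_pow_dvd hΨ.1 hD (q ^ J) n
        have hp0 : (p : ℤ) ≠ 0 := by positivity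
        have hcancelbase : ((p : ℤ) ^ (D * q ^ J)) ≠ 0 := pow_ne_zero _ hp0
        rw [← mul_dvd_mul_iff_left hcancelbase]
        obtain ⟨t, ht⟩ := h1
        have harr : (p : ℤ) ^ (D * q ^ J) *
              ((p : ℤ) ^ ((k + D) * q ^ (k + D + 1)) *
                ((p : ℤ) ^ (J * (n - 1)) * coeff n (Ψ ^ q ^ J)))
            = (p : ℤ) ^ ((k + D) * q ^ (k + D + 1)) * (p : ℤ) ^ (J * (n - 1)) *
                ((p : ℤ) ^ (D * q ^ J) * coeff n (Ψ ^ q ^ J)) := by ring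
        rw [harr, ht, ← mul_assoc, ← pow_add, ← pow_add]
        refine Dvd.dvd.mul_right ?_ t
        rw [← pow_add]
        refine pow_dvd_pow _ ?_
        have := arith1 (k := k) (D := D) hq2 (by omega : 1 ≤ J) hnq
        omega

section Analysis

variable {K : Type} [NormedField K] [CompleteSpace K]

lemma pK_ne_zero (hp : 1 < p) (hpK : ‖(p : K)‖ = (p : ℝ)⁻¹) : (p : K) ≠ 0 := by
  have h1 : ‖(p : K)‖ ≠ 0 := by
    rw [hpK]
    have : (0 : ℝ) < (p : ℝ)⁻¹ := by
      have : (0 : ℝ) < (p : ℝ) := by exact_mod_cast Nat.lt_of_lt_of_le Nat.zero_lt_one hp.le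
      positivity
    exact this.ne'
  exact fun h0 => h1 (by rw [h0, norm_zero])

lemma pR_pos (hp : 1 < p) : (0 : ℝ) < (p : ℝ) := by
  exact_mod_cast Nat.lt_of_lt_of_le Nat.zero_lt_one hp.le

lemma pR_lt (hp : 1 < p) : (1 : ℝ) < (p : ℝ) := by exact_mod_cast hp

lemma norm_p_zpow (hp : 1 < p) (hpK : ‖(p : K)‖ = (p : ℝ)⁻¹) (m : ℤ) :
    ‖(p : K) ^ m‖ = (p : ℝ) ^ (-m) := by
  rw [norm_zpow, hpK, inv_zpow, ← zpow_neg]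

lemma zpow_split (hp : 1 < p) (Cn : ℤ) (i : ℕ) :
    (p : ℝ) ^ (Cn - (i : ℤ)) = (p : ℝ) ^ Cn * ((p : ℝ)⁻¹) ^ i := by
  have hp0 : (p : ℝ) ≠ 0 := (pR_pos hp).ne'
  rw [zpow_sub₀ hp0, zpow_natCast, div_eq_mul_inv, inv_pow]

lemma norm_int_of_dvd (hna : IsUltrametricDist K) (hp : 1 < p)
    (hpK : ‖(p : K)‖ = (p : ℝ)⁻¹) {t s : ℕ} {m : ℤ} (h : (p : ℤ) ^ t ∣ (p : ℤ) ^ s * m) :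
    ‖(m : K)‖ ≤ (p : ℝ) ^ ((s : ℤ) - t) := by
  haveI := hna
  have hp0R : (p : ℝ) ≠ 0 := (pR_pos hp).ne'
  have hpK0 : (p : K) ≠ 0 := pK_ne_zero hp hpK
  obtain ⟨u, hu⟩ := h
  have hcast : ((p : K)) ^ s * (m : K) = (p : K) ^ t * (u : K) := by
    have h2 := congrArg (fun z : ℤ => (z : K)) hu
    push_cast at h2
    exact h2
  have hm : (m : K) = (p : K) ^ t * (u : K) * ((p : K) ^ s)⁻¹ := by
    field_simp
    linear_combination hcast
  rw [hm, norm_mul, norm_mul, norm_inv, norm_pow, norm_pow, hpK]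
  have h1 : ‖(u : K)‖ ≤ 1 := IsUltrametricDist.norm_intCast_le_one _ _
  have hnn : (0 : ℝ) ≤ ((p : ℝ)⁻¹) ^ t := by positivity
  calc ((p : ℝ)⁻¹) ^ t * ‖(u : K)‖ * (((p : ℝ)⁻¹) ^ s)⁻¹
      ≤ ((p : ℝ)⁻¹) ^ t * 1 * (((p : ℝ)⁻¹) ^ s)⁻¹ := by
        have : (0 : ℝ) ≤ (((p : ℝ)⁻¹) ^ s)⁻¹ := by positivity
        exact mul_le_mul_of_nonneg_right (mul_le_mul_of_nonneg_left h1 hnn) this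
    _ = (p : ℝ) ^ ((s : ℤ) - t) := by
        rw [mul_one, inv_pow, inv_pow, inv_inv, ← zpow_natCast (p : ℝ), ← zpow_natCast (p : ℝ),
          ← zpow_neg, ← zpow_add₀ hp0R, neg_add_eq_sub]

lemma exists_pow_norm_le (hp : 1 < p) (x : K) : ∃ M : ℕ, ‖x‖ ≤ (p : ℝ) ^ (M : ℤ) := by
  obtain ⟨M, hM⟩ := exists_nat_ge ‖x‖
  refine ⟨M, hM.trans ?_⟩
  rw [zpow_natCast]
  calc (M : ℝ) ≤ (2 : ℝ) ^ M := by
        have h1 : (M : ℝ) ≤ ((2 ^ M : ℕ) : ℝ) := by exact_mod_cast (Nat.lt_two_pow_self (n := M)).le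
        simpa using h1
    _ ≤ (p : ℝ) ^ M := by
        have h2 : (2 : ℝ) ≤ (p : ℝ) := by exact_mod_cast hp
        exact pow_le_pow_left₀ (by norm_num) h2 M

lemma summable_norm_coeff_mul (hna : IsUltrametricDist K) (hp : 1 < p) (hq2 : 2 ≤ q)
    (hpK : ‖(p : K)‖ = (p : ℝ)⁻¹) (hΨ : IsPsi p q Ψ) (m : ℕ) (x : K) :
    Summable (fun i : ℕ => ‖((coeff i (Ψ ^ m) : ℤ) : K) * x ^ i‖) := by
  obtain ⟨M, hM⟩ := exists_pow_norm_le hp x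
  obtain ⟨D, hD⟩ := val_bound hp hq2 hΨ (M + 1)
  have hp0R : (p : ℝ) ≠ 0 := (pR_pos hp).ne'
  have hgeo : Summable (fun i : ℕ => (p : ℝ) ^ ((D * m + (M + 1) * m : ℕ) : ℤ) * ((p : ℝ)⁻¹) ^ i) := by
    refine Summable.mul_left _ (summable_geometric_of_lt_one (by positivity) ?_)
    rw [inv_lt_one_iff₀]
    right
    exact pR_lt hp
  refine Summable.of_nonneg_of_le (fun i => norm_nonneg _) (fun i => ?_) hgeo
  rw [norm_mul]
  have h1 : ‖((coeff i (Ψ ^ m) : ℤ) : K)‖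
      ≤ (p : ℝ) ^ (((D * m : ℕ) : ℤ) - ((M + 1) * (i - m) : ℕ)) :=
    norm_int_of_dvd hna hp hpK (coeff_pow_dvd hΨ.1 hD m i)
  have h2 : ‖x ^ i‖ ≤ ((p : ℝ) ^ (M : ℤ)) ^ i := by
    rw [norm_pow]
    exact pow_le_pow_left₀ (norm_nonneg x) hM i
  calc ‖((coeff i (Ψ ^ m) : ℤ) : K)‖ * ‖x ^ i‖
      ≤ (p : ℝ) ^ (((D * m : ℕ) : ℤ) - ((M + 1) * (i - m) : ℕ)) * ((p : ℝ) ^ (M : ℤ)) ^ i :=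
        mul_le_mul h1 h2 (norm_nonneg _) (by positivity)
    _ = (p : ℝ) ^ ((((D * m : ℕ) : ℤ) - ((M + 1) * (i - m) : ℕ)) + (M : ℤ) * i) := by
        rw [← zpow_natCast ((p : ℝ) ^ (M : ℤ)), ← zpow_mul, ← zpow_add₀ hp0R]
    _ ≤ (p : ℝ) ^ (((D * m + (M + 1) * m : ℕ) : ℤ) - (i : ℤ)) := by
        refine zpow_le_zpow_right₀ (pR_lt hp).le ?_
        have hnat : (M + 1) * i ≤ (M + 1) * m + (M + 1) * (i - m) := by
          rw [← Nat.mul_add]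
          exact Nat.mul_le_mul_left _ (by omega)
        have hnat' : ((M : ℤ) + 1) * i ≤ ((M : ℤ) + 1) * m + (((M + 1) * (i - m) : ℕ) : ℤ) := by
          exact_mod_cast hnat
        push_cast
        push_cast at hnat'
        nlinarith [hnat']
    _ = (p : ℝ) ^ ((D * m + (M + 1) * m : ℕ) : ℤ) * ((p : ℝ)⁻¹) ^ i := zpow_split hp _ i

lemma eval_pow (hna : IsUltrametricDist K) (hp : 1 < p) (hq2 : 2 ≤ q)
    (hpK : ‖(p : K)‖ = (p : ℝ)⁻¹) (hΨ : IsPsi p q Ψ) (m : ℕ) (x : K) :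
    (psiEval Ψ x) ^ m = ∑' i : ℕ, ((coeff i (Ψ ^ m) : ℤ) : K) * x ^ i := by
  induction m with
  | zero =>
    rw [pow_zero]
    symm
    rw [tsum_eq_single 0 ?_]
    · simp
    · intro b hb
      rw [pow_zero, PowerSeries.coeff_one, if_neg hb]
      simp
  | succ m ih =>
    have hs1 : Summable (fun i : ℕ => ‖((coeff i Ψ : ℤ) : K) * x ^ i‖) := by
      have := summable_norm_coeff_mul hna hp hq2 hpK hΨ 1 x
      rwa [pow_one] at this
    rw [pow_succ, ih]
    unfold psiEval
    rw [tsum_mul_tsum_eq_tsum_sum_antidiagonal_of_summable_norm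
      (summable_norm_coeff_mul hna hp hq2 hpK hΨ m x) hs1]
    refine tsum_congr fun n => ?_
    rw [pow_succ, coeff_mul]
    push_cast
    rw [Finset.sum_mul]
    refine Finset.sum_congr rfl fun kl hkl => ?_
    rw [Finset.HasAntidiagonal.mem_antidiagonal] at hkl
    rw [← hkl, pow_add]
    ring

end Analysis

lemma arith2n {q n D j i : ℕ} (hq : 2 ≤ q) (h : q ^ j ≤ i) :
    2 * j + D * q ^ j + n * i + (n + 2) * q ^ j + i
      ≤ (n + 2 + D) * q ^ (n + 2 + D + 1) + (n + 2) * i + i * j := by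
  have hq4 : 2 ≤ q ^ (n + 2 + D) := le_trans hq (Nat.le_self_pow (by omega) q)
  rcases Nat.eq_zero_or_pos j with rfl | hj
  · have h1 : (n + 2 + D) ≤ (n + 2 + D) * q ^ (n + 2 + D + 1) :=
      Nat.le_mul_of_pos_right _ (by positivity)
    simp only [pow_zero, Nat.mul_zero, Nat.mul_one, Nat.zero_mul, Nat.add_zero]
    nlinarith [h1]
  · have hi2 : 2 ≤ i := le_trans (le_trans hq (Nat.le_self_pow (by omega) q)) h
    rcases le_or_gt j (n + 2 + D) with hc | hc
    · have f1 : q ^ j ≤ q ^ (n + 2 + D) := Nat.pow_le_pow_right (by omega) hc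
      have hA : (n + 2 + D) * q ^ j ≤ (n + 2 + D) * q ^ (n + 2 + D) :=
        Nat.mul_le_mul_left _ f1
      have hB2 : 2 * (n + 2 + D) ≤ (n + 2 + D) * q ^ (n + 2 + D) := by nlinarith [hq4]
      have f2 : 2 * q ^ (n + 2 + D) ≤ q ^ (n + 2 + D + 1) := by
        rw [pow_succ]
        nlinarith [Nat.one_le_two_pow (n := 1)]
      have hC : 2 * ((n + 2 + D) * q ^ (n + 2 + D)) ≤ (n + 2 + D) * q ^ (n + 2 + D + 1) := by
        calc 2 * ((n + 2 + D) * q ^ (n + 2 + D)) = (n + 2 + D) * (2 * q ^ (n + 2 + D)) := by ring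
          _ ≤ (n + 2 + D) * q ^ (n + 2 + D + 1) := Nat.mul_le_mul_left _ f2
      nlinarith [hA, hB2, hC, Nat.zero_le (i * j)]
    · have e1 : j - 1 < 2 ^ (j - 1) := Nat.lt_two_pow_self (n := _)
      have e2 : 2 ^ j = 2 * 2 ^ (j - 1) := by
        rw [← pow_succ']
        congr 1
        omega
      have e3 : 2 * j ≤ 2 ^ j := by omega
      have hq2j : 2 ^ j ≤ q ^ j := Nat.pow_le_pow_left hq j
      have e4 : 2 * j ≤ q ^ j := le_trans e3 hq2j
      have hm1 : q ^ j * (n + 2 + D + 1) ≤ q ^ j * j := Nat.mul_le_mul_left _ (by omega)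
      have hm2 : q ^ j * j ≤ i * j := Nat.mul_le_mul_right _ h
      nlinarith [hm1, hm2, e4, Nat.zero_le ((n + 2 + D) * q ^ (n + 2 + D + 1))]

section FE

variable {K : Type} [NormedField K] [CompleteSpace K]

set_option maxHeartbeats 1000000 in
lemma fe_hasSum (hna : IsUltrametricDist K) (hp : 1 < p) (hq2 : 2 ≤ q)
    (hpK : ‖(p : K)‖ = (p : ℝ)⁻¹) (hΨ : IsPsi p q Ψ) (x : K) (n : ℕ)
    (hx : ‖x‖ ≤ (p : ℝ) ^ (n : ℤ)) :
    HasSum (fun j : ℕ =>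
      (p : K) ^ (-(j : ℤ)) * (psiEval Ψ ((p : K) ^ (j : ℤ) * x)) ^ (q ^ j)) x := by
  haveI := hna
  have hp0R : (p : ℝ) ≠ 0 := (pR_pos hp).ne'
  have hp1R : (1 : ℝ) < p := pR_lt hp
  have hpK0 : (p : K) ≠ 0 := pK_ne_zero hp hpK
  obtain ⟨D, hD⟩ := val_bound hp hq2 hΨ (n + 2)
  set C : ℤ := (((n + 2 + D) * q ^ (n + 2 + D + 1) : ℕ) : ℤ) with hCdef
  set g : ℕ × ℕ → K := fun ji =>
    (p : K) ^ (-(ji.1 : ℤ)) *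
      (((coeff ji.2 (Ψ ^ (q ^ ji.1)) : ℤ) : K) * ((p : K) ^ (ji.1 : ℤ) * x) ^ ji.2) with hg
  have hgb : ∀ ji : ℕ × ℕ,
      ‖g ji‖ ≤ (p : ℝ) ^ C * (((p : ℝ)⁻¹) ^ ji.1 * ((p : ℝ)⁻¹) ^ ji.2) := by
    rintro ⟨j, i⟩
    rcases lt_or_ge i (q ^ j) with hlt | hge
    · have hz : coeff i (Ψ ^ (q ^ j)) = 0 := coeff_pow_zero hΨ.1 _ _ hlt
      simp only [hg, hz]
      simp only [Int.cast_zero, zero_mul, mul_zero, norm_zero]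
      positivity
    · have h1 : ‖((coeff i (Ψ ^ (q ^ j)) : ℤ) : K)‖
          ≤ (p : ℝ) ^ (((D * q ^ j : ℕ) : ℤ) - ((n + 2) * (i - q ^ j) : ℕ)) :=
        norm_int_of_dvd hna hp hpK (coeff_pow_dvd hΨ.1 hD (q ^ j) i)
      have h2 : ‖(p : K) ^ (j : ℤ) * x‖ ≤ (p : ℝ) ^ ((n : ℤ) - j) := by
        rw [norm_mul, norm_p_zpow hp hpK]
        calc (p : ℝ) ^ (-(j : ℤ)) * ‖x‖ ≤ (p : ℝ) ^ (-(j : ℤ)) * (p : ℝ) ^ (n : ℤ) :=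
              mul_le_mul_of_nonneg_left hx (by positivity)
          _ = (p : ℝ) ^ ((n : ℤ) - j) := by rw [← zpow_add₀ hp0R, neg_add_eq_sub]
      have h3 : ‖((p : K) ^ (j : ℤ) * x) ^ i‖ ≤ ((p : ℝ) ^ ((n : ℤ) - j)) ^ i := by
        rw [norm_pow]
        exact pow_le_pow_left₀ (norm_nonneg _) h2 i
      calc ‖g (j, i)‖
          = (p : ℝ) ^ (j : ℤ) *
              (‖((coeff i (Ψ ^ (q ^ j)) : ℤ) : K)‖ * ‖((p : K) ^ (j : ℤ) * x) ^ i‖) := by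
            simp only [hg]
            rw [norm_mul, norm_mul, norm_p_zpow hp hpK, neg_neg]
        _ ≤ (p : ℝ) ^ (j : ℤ) *
              ((p : ℝ) ^ (((D * q ^ j : ℕ) : ℤ) - ((n + 2) * (i - q ^ j) : ℕ)) *
                ((p : ℝ) ^ ((n : ℤ) - j)) ^ i) := by
            refine mul_le_mul_of_nonneg_left ?_ (by positivity)
            exact mul_le_mul h1 h3 (norm_nonneg _) (by positivity)
        _ = (p : ℝ) ^ ((j : ℤ) + ((((D * q ^ j : ℕ) : ℤ) - ((n + 2) * (i - q ^ j) : ℕ))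
              + ((n : ℤ) - j) * i)) := by
            rw [← zpow_natCast ((p : ℝ) ^ ((n : ℤ) - j)), ← zpow_mul, ← zpow_add₀ hp0R,
              ← zpow_add₀ hp0R]
        _ ≤ (p : ℝ) ^ (C - i - j) := by
            refine zpow_le_zpow_right₀ hp1R.le ?_
            have hnat := arith2n (q := q) (n := n) (D := D) (j := j) (i := i) hq2 hge
            have hsub : (((n + 2) * (i - q ^ j) : ℕ) : ℤ)
                = ((n : ℤ) + 2) * ((i : ℤ) - ((q ^ j : ℕ) : ℤ)) := by
              have : ((i - q ^ j : ℕ) : ℤ) = (i : ℤ) - ((q ^ j : ℕ) : ℤ) := by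
                omega
              push_cast [this]
              ring
            rw [hsub, hCdef]
            have hnat' : 2 * (j : ℤ) + D * ((q : ℤ) ^ j) + n * i + (n + 2) * ((q : ℤ) ^ j) + i
                ≤ ((n : ℤ) + 2 + D) * (q : ℤ) ^ (n + 2 + D + 1) + (n + 2) * i + i * j := by
              exact_mod_cast hnat
            push_cast
            nlinarith [hnat']
        _ = (p : ℝ) ^ C * (((p : ℝ)⁻¹) ^ j * ((p : ℝ)⁻¹) ^ i) := by
            have e : C - (i : ℤ) - j = C + (-(j : ℤ)) + (-(i : ℤ)) := by ring
            rw [e]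
            simp only [zpow_add₀ hp0R, zpow_neg, zpow_natCast, ← inv_pow]
            ring
  have hginv : Summable (fun i : ℕ => ((p : ℝ)⁻¹) ^ i) :=
    summable_geometric_of_lt_one (by positivity) (by
      rw [inv_lt_one_iff₀]; right; exact hp1R)
  have hgeo2 : Summable (fun ji : ℕ × ℕ =>
      (p : ℝ) ^ C * (((p : ℝ)⁻¹) ^ ji.1 * ((p : ℝ)⁻¹) ^ ji.2)) :=
    (Summable.mul_of_nonneg hginv hginv (fun _ => by positivity) (fun _ => by positivity)).mul_left _
  have hgnorm : Summable (fun ji => ‖g ji‖) :=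
    Summable.of_nonneg_of_le (fun _ => norm_nonneg _) hgb hgeo2
  have hgsum : Summable g := hgnorm.of_norm
  have hrow : ∀ j : ℕ, HasSum (fun i => g (j, i))
      ((p : K) ^ (-(j : ℤ)) * (psiEval Ψ ((p : K) ^ (j : ℤ) * x)) ^ (q ^ j)) := by
    intro j
    rw [eval_pow hna hp hq2 hpK hΨ]
    have hS : Summable (fun i : ℕ =>
        ((coeff i (Ψ ^ (q ^ j)) : ℤ) : K) * ((p : K) ^ (j : ℤ) * x) ^ i) :=
      (summable_norm_coeff_mul hna hp hq2 hpK hΨ (q ^ j) _).of_norm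
    exact hS.hasSum.mul_left _
  have hT : HasSum (fun j : ℕ =>
      (p : K) ^ (-(j : ℤ)) * (psiEval Ψ ((p : K) ^ (j : ℤ) * x)) ^ (q ^ j)) (∑' ji, g ji) :=
    HasSum.prod_fiberwise hgsum.hasSum hrow
  have hswap : HasSum (fun ij : ℕ × ℕ => g (ij.2, ij.1)) (∑' ji, g ji) :=
    ((Equiv.prodComm ℕ ℕ).hasSum_iff).2 hgsum.hasSum
  have hcol : ∀ i : ℕ, HasSum (fun j => g (j, i)) (if i = 1 then x else 0) := by
    intro i
    have hvanish : ∀ j ∉ Finset.range (i + 1), g (j, i) = 0 := by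
      intro j hj
      rw [Finset.mem_range, not_lt] at hj
      have hlt : i < q ^ j :=
        lt_of_lt_of_le (lt_of_lt_of_le (Nat.lt_succ_self i) (le_trans hj (Nat.lt_two_pow_self (n := j)).le))
          (Nat.pow_le_pow_left hq2 j)
      simp only [hg, coeff_pow_zero hΨ.1 _ _ hlt]
      simp
    have h0 : HasSum (fun j => g (j, i)) _ := hasSum_sum_of_ne_finset_zero hvanish
    have hval : (∑ j ∈ Finset.range (i + 1), g (j, i)) = if i = 1 then x else 0 := by
      rcases Nat.eq_zero_or_pos i with rfl | hi
      · rw [if_neg (by omega)]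
        refine Finset.sum_eq_zero fun j _ => ?_
        have hlt : 0 < q ^ j := by positivity
        simp only [hg, coeff_pow_zero hΨ.1 _ _ hlt]
        simp
      · obtain ⟨i', rfl⟩ : ∃ i', i = i' + 1 := ⟨i - 1, by omega⟩
        have hgji : ∀ j : ℕ, g (j, i' + 1)
            = (((p : ℤ) ^ (j * i') * coeff (i' + 1) (Ψ ^ (q ^ j)) : ℤ) : K) * x ^ (i' + 1) := by
          intro j
          have hz : (p : K) ^ (-(j : ℤ)) * ((p : K) ^ (j : ℤ)) ^ (i' + 1)
              = (p : K) ^ (j * i' : ℕ) := by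
            rw [← zpow_natCast (p : K) (j * i'), ← zpow_natCast ((p : K) ^ (j : ℤ)), ← zpow_mul,
              ← zpow_add₀ hpK0]
            congr 1
            push_cast
            ring
          calc g (j, i' + 1)
              = ((p : K) ^ (-(j : ℤ)) * ((p : K) ^ (j : ℤ)) ^ (i' + 1)) *
                  (((coeff (i' + 1) (Ψ ^ (q ^ j)) : ℤ) : K) * x ^ (i' + 1)) := by
                simp only [hg]
                rw [mul_pow]
                ring
            _ = (((p : ℤ) ^ (j * i') * coeff (i' + 1) (Ψ ^ (q ^ j)) : ℤ) : K) * x ^ (i' + 1) := by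
                rw [hz]
                push_cast
                ring
        rw [Finset.sum_congr rfl (fun j _ => hgji j), ← Finset.sum_mul]
        have hk := key_id hp hΨ (i' + 1) (by omega)
        have hsum : (∑ j ∈ Finset.range (i' + 1 + 1),
            (((p : ℤ) ^ (j * i') * coeff (i' + 1) (Ψ ^ (q ^ j)) : ℤ) : K))
            = (((if i' + 1 = 1 then 1 else 0 : ℤ)) : K) := by
          have hk' : (∑ j ∈ Finset.range (i' + 1 + 1),
              (p : ℤ) ^ (j * i') * coeff (i' + 1) (Ψ ^ (q ^ j)))
              = (if i' + 1 = 1 then 1 else 0 : ℤ) := by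
            simpa only [Nat.add_sub_cancel] using hk
          rw [← Int.cast_sum, hk']
        rw [hsum]
        by_cases hi0 : i' = 0 <;> simp [hi0]
    rw [hval] at h0
    exact h0
  have hcolSum : HasSum (fun i : ℕ => if i = 1 then x else 0) (∑' ji, g ji) :=
    HasSum.prod_fiberwise hswap hcol
  have hxval : (∑' ji, g ji) = x := hcolSum.unique (hasSum_ite_eq 1 x)
  rw [hxval] at hT
  exact hT

end FE

section Cong

variable {K : Type} [NormedField K] [CompleteSpace K]

lemma psiEval_norm_le (hna : IsUltrametricDist K) (h0 : constantCoeff Ψ = 0)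
    {y : K} (hy : ‖y‖ ≤ 1) : ‖psiEval Ψ y‖ ≤ ‖y‖ := by
  haveI := hna
  unfold psiEval
  refine IsUltrametricDist.norm_tsum_le_of_forall_le_of_nonneg (norm_nonneg y) (fun i => ?_)
  rcases Nat.eq_zero_or_pos i with rfl | hi
  · rw [coeff_zero_eq_constantCoeff, h0]
    simp
  · rw [norm_mul, norm_pow]
    calc ‖((coeff i Ψ : ℤ) : K)‖ * ‖y‖ ^ i ≤ 1 * ‖y‖ ^ i := by
          have h1 : ‖((coeff i Ψ : ℤ) : K)‖ ≤ 1 := IsUltrametricDist.norm_intCast_le_one _ _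
          exact mul_le_mul_of_nonneg_right h1 (by positivity)
      _ = ‖y‖ ^ i := one_mul _
      _ ≤ ‖y‖ := pow_le_of_le_one (norm_nonneg y) hy (by omega)

lemma pow_p_congr (hna : IsUltrametricDist K) (hpp : p.Prime)
    (hpK : ‖(p : K)‖ = (p : ℝ)⁻¹) {u v : K} (hu : ‖u‖ ≤ 1) (hv : ‖v‖ ≤ 1)
    (h : ‖u - v‖ ≤ (p : ℝ)⁻¹) :
    ∀ s : ℕ, ‖u ^ (p ^ s) - v ^ (p ^ s)‖ ≤ (p : ℝ) ^ (-(s : ℤ) - 1) := by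
  haveI := hna
  have hp : 1 < p := hpp.one_lt
  have hp0R : (p : ℝ) ≠ 0 := (pR_pos hp).ne'
  have hp1R : (1 : ℝ) < p := pR_lt hp
  intro s
  induction s with
  | zero =>
    simp only [pow_zero, pow_one, Nat.cast_zero, neg_zero, zero_sub]
    rw [zpow_neg_one]
    exact h
  | succ s ih =>
    have hw : ‖u ^ (p ^ s)‖ ≤ 1 := by
      rw [norm_pow]; exact pow_le_one₀ (norm_nonneg u) hu
    have hz1 : ‖v ^ (p ^ s)‖ ≤ 1 := by
      rw [norm_pow]; exact pow_le_one₀ (norm_nonneg v) hv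
    set w : K := u ^ (p ^ s) with hwdef
    set z : K := v ^ (p ^ s) with hzdef
    have hps : u ^ (p ^ (s + 1)) = w ^ p := by rw [hwdef, pow_succ, pow_mul]
    have hps' : v ^ (p ^ (s + 1)) = z ^ p := by rw [hzdef, pow_succ, pow_mul]
    rw [hps, hps']
    have h1 : ((w - z) + z) ^ p
        = ∑ k ∈ Finset.range (p + 1), (w - z) ^ k * z ^ (p - k) * (p.choose k : K) :=
      add_pow _ _ _
    rw [sub_add_cancel, Finset.sum_range_succ'] at h1
    have h10 : (w - z) ^ 0 * z ^ (p - 0) * (p.choose 0 : K) = z ^ p := by simp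
    rw [h10] at h1
    have hdiff : w ^ p - z ^ p
        = ∑ k ∈ Finset.range p, (w - z) ^ (k + 1) * z ^ (p - (k + 1)) * (p.choose (k + 1) : K) := by
      rw [h1]; ring
    rw [hdiff]
    refine IsUltrametricDist.norm_sum_le_of_forall_le_of_nonneg (by positivity) (fun k hk => ?_)
    rw [Finset.mem_range] at hk
    have hwz1 : ‖w - z‖ ≤ 1 := by
      refine le_trans ih ?_
      calc (p : ℝ) ^ (-(s : ℤ) - 1) ≤ (p : ℝ) ^ (0 : ℤ) :=
            zpow_le_zpow_right₀ hp1R.le (by omega)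
        _ = 1 := zpow_zero _
    rw [norm_mul, norm_mul, norm_pow, norm_pow]
    have hz2 : ‖z‖ ^ (p - (k + 1)) ≤ 1 := pow_le_one₀ (norm_nonneg _) hz1
    rcases Nat.lt_or_ge (k + 1) p with hklt | hkge
    · -- middle terms: p divides the binomial coefficient
      have hchoose : ‖((p.choose (k + 1) : ℕ) : K)‖ ≤ (p : ℝ) ^ ((0 : ℤ) - 1) := by
        have hdvd : (p : ℤ) ^ 1 ∣ (p : ℤ) ^ 0 * ((p.choose (k + 1) : ℕ) : ℤ) := by
          rw [pow_zero, one_mul, pow_one]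
          exact_mod_cast hpp.dvd_choose_self (by omega) hklt
        have := norm_int_of_dvd hna hp hpK hdvd
        simpa using this
      have hwzk : ‖w - z‖ ^ (k + 1) ≤ (p : ℝ) ^ (-(s : ℤ) - 1) := by
        calc ‖w - z‖ ^ (k + 1) ≤ ‖w - z‖ ^ 1 :=
              pow_le_pow_of_le_one (norm_nonneg _) hwz1 (by omega)
          _ = ‖w - z‖ := pow_one _
          _ ≤ _ := ih
      calc ‖w - z‖ ^ (k + 1) * ‖z‖ ^ (p - (k + 1)) * ‖((p.choose (k + 1) : ℕ) : K)‖
          ≤ (p : ℝ) ^ (-(s : ℤ) - 1) * 1 * (p : ℝ) ^ ((0 : ℤ) - 1) := by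
            refine mul_le_mul ?_ hchoose (norm_nonneg _) (by positivity)
            refine mul_le_mul hwzk hz2 (by positivity) (by positivity)
        _ = (p : ℝ) ^ ((-(s : ℤ) - 1) + ((0 : ℤ) - 1)) := by
            rw [mul_one, ← zpow_add₀ hp0R]
        _ ≤ (p : ℝ) ^ (-((s : ℤ) + 1) - 1) := by
            refine zpow_le_zpow_right₀ hp1R.le (by omega)
        _ = (p : ℝ) ^ (-((s + 1 : ℕ) : ℤ) - 1) := by push_cast; ring_nf
    · -- top term k + 1 = p
      have hkp : k + 1 = p := by omega
      have hwzp : ‖w - z‖ ^ (k + 1) ≤ ((p : ℝ) ^ (-(s : ℤ) - 1)) ^ p := by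
        rw [hkp]
        exact pow_le_pow_left₀ (norm_nonneg _) ih p
      have hchoose1 : ‖((p.choose (k + 1) : ℕ) : K)‖ ≤ 1 :=
        IsUltrametricDist.norm_natCast_le_one _ _
      calc ‖w - z‖ ^ (k + 1) * ‖z‖ ^ (p - (k + 1)) * ‖((p.choose (k + 1) : ℕ) : K)‖
          ≤ ((p : ℝ) ^ (-(s : ℤ) - 1)) ^ p * 1 * 1 := by
            refine mul_le_mul ?_ hchoose1 (norm_nonneg _) (by positivity)
            refine mul_le_mul hwzp hz2 (by positivity) (by positivity)
        _ = (p : ℝ) ^ ((-(s : ℤ) - 1) * p) := by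
            rw [mul_one, mul_one, ← zpow_natCast ((p : ℝ) ^ (-(s : ℤ) - 1)), ← zpow_mul]
        _ ≤ (p : ℝ) ^ (-((s + 1 : ℕ) : ℤ) - 1) := by
            refine zpow_le_zpow_right₀ hp1R.le ?_
            have hp2 : (2 : ℤ) ≤ (p : ℤ) := by exact_mod_cast hp
            push_cast
            nlinarith [hp2, Int.natCast_nonneg s]

end Cong


theorem psi_teichmuller_digits (p f : ℕ) (hp : p.Prime) (hf : 0 < f)
    (q : ℕ) (hq : q = p ^ f)
    (Ψ : PowerSeries ℤ) (hΨ : IsPsi p q Ψ)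
    (K : Type) [NormedField K] [CompleteSpace K] (hna : IsUltrametricDist K)
    (hpK : ‖(p : K)‖ = (p : ℝ)⁻¹)
    (hdisc : ∀ x : K, x ≠ 0 → ∃ m : ℤ, ‖x‖ = (p : ℝ) ^ m)
    (hres : ∀ x : K, ‖x‖ ≤ 1 → ‖x ^ q - x‖ ≤ (p : ℝ)⁻¹)
    (a : K) (d : ℤ → K)
    (hteich : ∀ i : ℤ, (d i) ^ q = d i)
    (hdigit : ∀ i : ℤ, ‖d i - psiEval Ψ ((p : K) ^ (-i) * a)‖ ≤ (p : ℝ)⁻¹) :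
    ∀ N : ℕ, ‖a‖ ≤ (p : ℝ) ^ (N : ℤ) →
      Tendsto (fun n : ℕ => ∑ i ∈ Finset.range n, (p : K) ^ ((i : ℤ) - (N : ℤ)) * d ((i : ℤ) - N))
        atTop (nhds a) := by
  classical
  intro N ha
  haveI := hna
  have hp1 : 1 < p := hp.one_lt
  have hq2 : 2 ≤ q := by
    rw [hq]
    exact Nat.one_lt_pow (by omega) hp1
  have hp0R : (p : ℝ) ≠ 0 := (pR_pos hp1).ne'
  have hp1R : (1 : ℝ) < p := pR_lt hp1
  have hpK0 : (p : K) ≠ 0 := pK_ne_zero hp1 hpK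
  have hsub_max : ∀ y z : K, ‖y - z‖ ≤ max ‖y‖ ‖z‖ := fun y z => by
    rw [sub_eq_add_neg]
    simpa using IsUltrametricDist.norm_add_le_max y (-z)
  have hdq : ∀ (i : ℤ) (m : ℕ), (d i) ^ (q ^ m) = d i := by
    intro i m
    induction m with
    | zero => simp
    | succ m ihm => rw [pow_succ, pow_mul, ihm, hteich]
  have hd1 : ∀ i : ℤ, ‖d i‖ ≤ 1 := by
    intro i
    by_contra hgt
    push_neg at hgt
    have h1 : ‖d i‖ ^ q = ‖d i‖ := by rw [← norm_pow, hteich]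
    have h2 : ‖d i‖ ^ 2 ≤ ‖d i‖ ^ q := pow_le_pow_right₀ hgt.le hq2
    nlinarith [h2, h1, hgt]
  set S : ℕ → K := fun n =>
    ∑ i ∈ Finset.range n, (p : K) ^ ((i : ℤ) - (N : ℤ)) * d ((i : ℤ) - N) with hS
  have key : ∀ n : ℕ, ‖a - S n‖ ≤ (p : ℝ) ^ ((N : ℤ) - n) := by
    intro n
    induction n with
    | zero => simpa [hS] using ha
    | succ n ih =>
      set e : ℤ := (n : ℤ) - N with he
      set x : K := (p : K) ^ (-e) * a with hx
      have hxnorm : ‖x‖ ≤ (p : ℝ) ^ (n : ℤ) := by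
        rw [hx, norm_mul, norm_p_zpow hp1 hpK, neg_neg]
        calc (p : ℝ) ^ e * ‖a‖ ≤ (p : ℝ) ^ e * (p : ℝ) ^ (N : ℤ) :=
              mul_le_mul_of_nonneg_left ha (by positivity)
          _ = (p : ℝ) ^ (n : ℤ) := by
              rw [← zpow_add₀ hp0R]
              congr 1
              rw [he]; ring
      have hFE := fe_hasSum hna hp1 hq2 hpK hΨ x n hxnorm
      set t : ℕ → K := fun j =>
        (p : K) ^ (-(j : ℤ)) * (psiEval Ψ ((p : K) ^ (j : ℤ) * x)) ^ (q ^ j) with ht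
      have harg : ∀ j : ℕ, (p : K) ^ (j : ℤ) * x = (p : K) ^ (-(e - j)) * a := by
        intro j
        rw [hx, ← mul_assoc, ← zpow_add₀ hpK0]
        congr 2
        ring
      have hΨnorm : ∀ j : ℕ, ‖psiEval Ψ ((p : K) ^ (j : ℤ) * x)‖ ≤ 1 := by
        intro j
        have h1 := hdigit (e - j)
        rw [← harg j] at h1
        have h2 : psiEval Ψ ((p : K) ^ (j : ℤ) * x)
            = d (e - j) - (d (e - j) - psiEval Ψ ((p : K) ^ (j : ℤ) * x)) := by ring
        rw [h2]
        refine le_trans (hsub_max _ _) (max_le (hd1 _) (le_trans h1 ?_))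
        rw [inv_le_one_iff₀]
        right
        exact hp1R.le
      have hA : ∀ j : ℕ, 1 ≤ j →
          ‖t j - (p : K) ^ (-(j : ℤ)) * d (e - j)‖ ≤ (p : ℝ)⁻¹ := by
        intro j hj
        have hq_eq : q ^ j = p ^ (f * j) := by rw [hq, ← pow_mul]
        have hdij := hdigit (e - j)
        rw [← harg j] at hdij
        have hdij' : ‖psiEval Ψ ((p : K) ^ (j : ℤ) * x) - d (e - j)‖ ≤ (p : ℝ)⁻¹ := by
          rw [norm_sub_rev]; exact hdij
        have hcong : ‖(psiEval Ψ ((p : K) ^ (j : ℤ) * x)) ^ (q ^ j) - (d (e - j)) ^ (q ^ j)‖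
            ≤ (p : ℝ) ^ (-((f * j : ℕ) : ℤ) - 1) := by
          rw [hq_eq]
          exact pow_p_congr hna hp hpK (hΨnorm j) (hd1 _) hdij' (f * j)
        rw [hdq (e - j) j] at hcong
        have heq : t j - (p : K) ^ (-(j : ℤ)) * d (e - j)
            = (p : K) ^ (-(j : ℤ)) *
              ((psiEval Ψ ((p : K) ^ (j : ℤ) * x)) ^ (q ^ j) - d (e - j)) := by
          rw [ht]; ring
        rw [heq, norm_mul, norm_p_zpow hp1 hpK, neg_neg]
        calc (p : ℝ) ^ (j : ℤ) * ‖(psiEval Ψ ((p : K) ^ (j : ℤ) * x)) ^ (q ^ j) - d (e - j)‖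
            ≤ (p : ℝ) ^ (j : ℤ) * (p : ℝ) ^ (-((f * j : ℕ) : ℤ) - 1) :=
              mul_le_mul_of_nonneg_left hcong (by positivity)
          _ = (p : ℝ) ^ ((j : ℤ) + (-((f * j : ℕ) : ℤ) - 1)) := by rw [← zpow_add₀ hp0R]
          _ ≤ (p : ℝ) ^ (-1 : ℤ) := by
              refine zpow_le_zpow_right₀ hp1R.le ?_
              have : (j : ℤ) ≤ ((f * j : ℕ) : ℤ) := by
                push_cast
                nlinarith [show (1 : ℤ) ≤ (f : ℤ) from by exact_mod_cast hf, Int.natCast_nonneg j]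
              omega
          _ = (p : ℝ)⁻¹ := by rw [zpow_neg_one]
      have hB : ∀ j : ℕ, n + 1 ≤ j → ‖t j‖ ≤ (p : ℝ)⁻¹ := by
        intro j hj
        have hylt : ‖(p : K) ^ (j : ℤ) * x‖ ≤ (p : ℝ) ^ ((n : ℤ) - j) := by
          rw [norm_mul, norm_p_zpow hp1 hpK]
          calc (p : ℝ) ^ (-(j : ℤ)) * ‖x‖ ≤ (p : ℝ) ^ (-(j : ℤ)) * (p : ℝ) ^ (n : ℤ) :=
                mul_le_mul_of_nonneg_left hxnorm (by positivity)
            _ = (p : ℝ) ^ ((n : ℤ) - j) := by rw [← zpow_add₀ hp0R, neg_add_eq_sub]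
        have hy1 : ‖(p : K) ^ (j : ℤ) * x‖ ≤ 1 := by
          refine le_trans hylt ?_
          calc (p : ℝ) ^ ((n : ℤ) - j) ≤ (p : ℝ) ^ (0 : ℤ) :=
                zpow_le_zpow_right₀ hp1R.le (by omega)
            _ = 1 := zpow_zero _
        have hψ : ‖psiEval Ψ ((p : K) ^ (j : ℤ) * x)‖ ≤ (p : ℝ) ^ ((n : ℤ) - j) :=
          le_trans (psiEval_norm_le hna hΨ.1 hy1) hylt
        have hq2j : (j : ℤ) < ((q ^ j : ℕ) : ℤ) := by
          have h2j : j < 2 ^ j := Nat.lt_two_pow_self (n := j)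
          have hqq : 2 ^ j ≤ q ^ j := Nat.pow_le_pow_left hq2 j
          exact_mod_cast lt_of_lt_of_le h2j hqq
        calc ‖t j‖ = (p : ℝ) ^ (j : ℤ) * ‖psiEval Ψ ((p : K) ^ (j : ℤ) * x)‖ ^ (q ^ j) := by
              rw [ht]
              rw [norm_mul, norm_p_zpow hp1 hpK, neg_neg, norm_pow]
          _ ≤ (p : ℝ) ^ (j : ℤ) * ((p : ℝ) ^ ((n : ℤ) - j)) ^ (q ^ j) := by
              refine mul_le_mul_of_nonneg_left ?_ (by positivity)
              exact pow_le_pow_left₀ (norm_nonneg _) hψ _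
          _ = (p : ℝ) ^ ((j : ℤ) + ((n : ℤ) - j) * (q ^ j : ℕ)) := by
              rw [← zpow_natCast ((p : ℝ) ^ ((n : ℤ) - j)), ← zpow_mul, ← zpow_add₀ hp0R]
          _ ≤ (p : ℝ) ^ (-1 : ℤ) := by
              refine zpow_le_zpow_right₀ hp1R.le ?_
              have h1 : (n : ℤ) - j ≤ -1 := by omega
              have h2 : (0 : ℤ) ≤ (q ^ j : ℕ) := Int.natCast_nonneg _
              nlinarith [hq2j]
          _ = (p : ℝ)⁻¹ := by rw [zpow_neg_one]
      have hsummt : Summable t := hFE.summable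
      have hts : psiEval Ψ x = x - ∑' j : ℕ, t (j + 1) := by
        have h1 : ∑' j, t j = x := hFE.tsum_eq
        rw [Summable.tsum_eq_zero_add hsummt] at h1
        have ht0 : t 0 = psiEval Ψ x := by
          rw [ht]
          simp
        rw [ht0] at h1
        exact (eq_sub_of_add_eq h1)
      set F : ℕ → K := fun j =>
        t (j + 1) - (if j + 1 ≤ n then (p : K) ^ (-((j + 1 : ℕ) : ℤ)) * d (e - ((j + 1 : ℕ) : ℤ))
          else 0) with hF
      have hifsummable : Summable (fun j : ℕ =>
          (if j + 1 ≤ n then (p : K) ^ (-((j + 1 : ℕ) : ℤ)) * d (e - ((j + 1 : ℕ) : ℤ))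
            else 0)) := by
        refine summable_of_ne_finset_zero (s := Finset.range n) fun j hj => ?_
        rw [Finset.mem_range, not_lt] at hj
        rw [if_neg (by omega)]
      have hshift : Summable (fun j : ℕ => t (j + 1)) := (summable_nat_add_iff 1).2 hsummt
      have hFsummable : Summable F := hshift.sub hifsummable
      have hFbound : ∀ j, ‖F j‖ ≤ (p : ℝ)⁻¹ := by
        intro j
        have hFj : F j = t (j + 1) - (if j + 1 ≤ n then
            (p : K) ^ (-((j + 1 : ℕ) : ℤ)) * d (e - ((j + 1 : ℕ) : ℤ)) else 0) := rfl
        rw [hFj]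
        by_cases hc : j + 1 ≤ n
        · rw [if_pos hc]
          exact hA (j + 1) (by omega)
        · rw [if_neg hc, sub_zero]
          exact hB (j + 1) (by omega)
      have hFnorm : ‖∑' j, F j‖ ≤ (p : ℝ)⁻¹ :=
        IsUltrametricDist.norm_tsum_le_of_forall_le_of_nonneg (by positivity) hFbound
      have htsum_if : (∑' j : ℕ, (if j + 1 ≤ n then
            (p : K) ^ (-((j + 1 : ℕ) : ℤ)) * d (e - ((j + 1 : ℕ) : ℤ)) else 0))
          = ∑ j ∈ Finset.range n, (p : K) ^ (-((j + 1 : ℕ) : ℤ)) * d (e - ((j + 1 : ℕ) : ℤ)) := by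
        rw [tsum_eq_sum (s := Finset.range n) ?_]
        · refine Finset.sum_congr rfl fun j hj => ?_
          rw [Finset.mem_range] at hj
          rw [if_pos (by omega)]
        · intro j hj
          rw [Finset.mem_range, not_lt] at hj
          rw [if_neg (by omega)]
      have hFsum : ∑' j, F j = (∑' j : ℕ, t (j + 1))
          - ∑ j ∈ Finset.range n, (p : K) ^ (-((j + 1 : ℕ) : ℤ)) * d (e - ((j + 1 : ℕ) : ℤ)) := by
        rw [hF, Summable.tsum_sub hshift hifsummable, htsum_if]
      have hSd : (p : K) ^ (-e) * S n
          = ∑ j ∈ Finset.range n, (p : K) ^ (-((j + 1 : ℕ) : ℤ)) * d (e - ((j + 1 : ℕ) : ℤ)) := by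
        rw [hS, Finset.mul_sum, ← Finset.sum_range_reflect]
        refine Finset.sum_congr rfl fun i hi => ?_
        rw [Finset.mem_range] at hi
        have h1 : ((n - 1 - i : ℕ) : ℤ) = (n : ℤ) - 1 - i := by omega
        rw [← mul_assoc, ← zpow_add₀ hpK0]
        have h2 : -e + (((n - 1 - i : ℕ) : ℤ) - N) = -((i + 1 : ℕ) : ℤ) := by
          rw [h1, he]; push_cast; ring
        have h3 : ((n - 1 - i : ℕ) : ℤ) - N = e - ((i + 1 : ℕ) : ℤ) := by
          rw [h1, he]; push_cast; ring
        rw [h2, h3]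
      have hbd : ‖(p : K) ^ (-e) * (a - S n) - d e‖ ≤ (p : ℝ)⁻¹ := by
        have h1 : (p : K) ^ (-e) * (a - S n) - d e
            = (∑' j, F j) + (psiEval Ψ x - d e) := by
          rw [hFsum, ← hSd]
          have h2 : (p : K) ^ (-e) * (a - S n) = x - (p : K) ^ (-e) * S n := by
            rw [hx]; ring
          rw [h2, hts]
          ring
        rw [h1]
        refine le_trans (IsUltrametricDist.norm_add_le_max _ _) (max_le hFnorm ?_)
        have h4 := hdigit e
        rw [← hx] at h4
        rw [norm_sub_rev]
        exact h4
      have hstep : a - S (n + 1) = (p : K) ^ e * ((p : K) ^ (-e) * (a - S n) - d e) := by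
        have h5 : S (n + 1) = S n + (p : K) ^ e * d e := by
          simp only [hS, Finset.sum_range_succ, he]
        rw [h5, mul_sub, ← mul_assoc, ← zpow_add₀ hpK0, add_neg_cancel, zpow_zero, one_mul]
        ring
      rw [hstep, norm_mul, norm_p_zpow hp1 hpK]
      calc (p : ℝ) ^ (-e) * ‖(p : K) ^ (-e) * (a - S n) - d e‖
          ≤ (p : ℝ) ^ (-e) * (p : ℝ)⁻¹ := mul_le_mul_of_nonneg_left hbd (by positivity)
        _ = (p : ℝ) ^ ((N : ℤ) - (n + 1 : ℕ)) := by
            rw [← zpow_neg_one, ← zpow_add₀ hp0R]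
            congr 1
            rw [he]; push_cast; ring
  have hinv : (p : ℝ)⁻¹ < 1 := by
    rw [inv_lt_one_iff₀]; right; exact hp1R
  have hdist : ∀ n : ℕ, dist (S n) a ≤ (p : ℝ) ^ (N : ℤ) * ((p : ℝ)⁻¹) ^ n := by
    intro n
    rw [dist_eq_norm, norm_sub_rev, ← zpow_split hp1]
    exact key n
  have hgeo : Tendsto (fun n : ℕ => (p : ℝ) ^ (N : ℤ) * ((p : ℝ)⁻¹) ^ n) atTop
      (nhds ((p : ℝ) ^ (N : ℤ) * 0)) :=
    (tendsto_pow_atTop_nhds_zero_of_lt_one (by positivity) hinv).const_mul _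
  rw [mul_zero] at hgeo
  rw [tendsto_iff_dist_tendsto_zero]
  exact squeeze_zero (fun n => dist_nonneg) hdist hgeo
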